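/- Let m ≥ 1, r ≥ 1 and p, q ∈ [1,∞) with q ≥ p and 1/r − m/p + m/q > 0, and let s be defined by 1/s = 1/r − m/p + m/q. Then every multiple (r; p,…,p)-summing m-linear operator T : X₁ × ⋯ × X_m → Y is multiple (s; q,…,q)-summing, and π_{(s;q)}(T) ≤ π_{(r;p)}(T). -/

import Mathlib

open scoped BigOperators

/-- The weak ℓ^p norm of a finite family in a normed space:
`sup_{φ ∈ B_{X'}} (∑ j |φ(x_j)|^p)^(1/p)`. -/
noncomputable def weakNorm {X : Type*} [NormedAddCommGroup X] [NormedSpace ℝ X]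
    {n : ℕ} (x : Fin n → X) (p : ℝ) : ℝ :=
  ⨆ φ : {φ : X →L[ℝ] ℝ // ‖φ‖ ≤ 1}, (∑ j, |φ.1 (x j)| ^ p) ^ (1 / p)

section WeakNormAux

variable {X : Type*} [NormedAddCommGroup X] [NormedSpace ℝ X] {n : ℕ}

lemma weakNorm_nonneg (x : Fin n → X) (p : ℝ) : 0 ≤ weakNorm x p :=
  Real.iSup_nonneg fun _ => Real.rpow_nonneg
    (Finset.sum_nonneg fun _ _ => Real.rpow_nonneg (abs_nonneg _) _) _

lemma le_weakNorm (x : Fin n → X) {p : ℝ} (hp : 0 < p)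
    (φ : {φ : X →L[ℝ] ℝ // ‖φ‖ ≤ 1}) :
    (∑ j, |φ.1 (x j)| ^ p) ^ (1 / p) ≤ weakNorm x p := by
  refine le_ciSup (f := fun φ : {φ : X →L[ℝ] ℝ // ‖φ‖ ≤ 1} =>
    (∑ j, |φ.1 (x j)| ^ p) ^ (1 / p)) ?_ φ
  refine ⟨(∑ j, ‖x j‖ ^ p) ^ (1 / p), ?_⟩
  rintro _ ⟨ψ, rfl⟩
  refine Real.rpow_le_rpow (Finset.sum_nonneg fun _ _ => Real.rpow_nonneg (abs_nonneg _) _)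
    (Finset.sum_le_sum fun j _ => ?_) (by positivity)
  refine Real.rpow_le_rpow (abs_nonneg _) ?_ hp.le
  calc |ψ.1 (x j)| = ‖ψ.1 (x j)‖ := (Real.norm_eq_abs _).symm
    _ ≤ ‖ψ.1‖ * ‖x j‖ := ψ.1.le_opNorm _
    _ ≤ 1 * ‖x j‖ := by gcongr; exact ψ.2
    _ = ‖x j‖ := one_mul _

instance ball_nonempty : Nonempty {φ : X →L[ℝ] ℝ // ‖φ‖ ≤ 1} :=
  ⟨⟨0, by simp⟩⟩

lemma weakNorm_smul_le (x : Fin n → X) (lam : Fin n → ℝ) (hl : ∀ i, 0 ≤ lam i)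
    {p q t : ℝ} (hp : 0 < p) (hq : 0 < q) (hpt : p < t) (ht : 1 / t = 1 / p - 1 / q) :
    weakNorm (fun j => lam j • x j) p ≤ (∑ j, lam j ^ t) ^ (1 / t) * weakNorm x q := by
  have ht0 : 0 < t := hp.trans hpt
  have hconj : (t / p).HolderConjugate (q / p) := by
    rw [Real.holderConjugate_iff]
    constructor
    · exact (one_lt_div hp).2 hpt
    · rw [inv_div, inv_div]
      rw [one_div, one_div, one_div] at ht
      field_simp
      field_simp at ht
      nlinarith [ht]
  refine ciSup_le fun φ => ?_
  have step1 : ∀ j, |φ.1 (lam j • x j)| ^ p = lam j ^ p * |φ.1 (x j)| ^ p := by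
    intro j
    rw [map_smul, smul_eq_mul, abs_mul, abs_of_nonneg (hl j),
      Real.mul_rpow (hl j) (abs_nonneg _)]
  have holder : ∑ j, lam j ^ p * |φ.1 (x j)| ^ p ≤
      (∑ j, lam j ^ t) ^ (p / t) * (∑ j, |φ.1 (x j)| ^ q) ^ (p / q) := by
    have := Real.inner_le_Lp_mul_Lq_of_nonneg (s := Finset.univ)
      (f := fun j => lam j ^ p) (g := fun j => |φ.1 (x j)| ^ p) hconj
      (fun j _ => Real.rpow_nonneg (hl j) _)
      (fun j _ => Real.rpow_nonneg (abs_nonneg _) _)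
    calc ∑ j, lam j ^ p * |φ.1 (x j)| ^ p
        ≤ (∑ j, (lam j ^ p) ^ (t / p)) ^ (1 / (t / p)) *
          (∑ j, (|φ.1 (x j)| ^ p) ^ (q / p)) ^ (1 / (q / p)) := this
      _ = (∑ j, lam j ^ t) ^ (p / t) * (∑ j, |φ.1 (x j)| ^ q) ^ (p / q) := by
          rw [one_div_div, one_div_div]
          congr 2
          · exact Finset.sum_congr rfl fun j _ => by
              rw [← Real.rpow_mul (hl j), mul_div_cancel₀ _ hp.ne']
          · exact Finset.sum_congr rfl fun j _ => by
              rw [← Real.rpow_mul (abs_nonneg _), mul_div_cancel₀ _ hp.ne']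
  calc (∑ j, |φ.1 (lam j • x j)| ^ p) ^ (1 / p)
      ≤ ((∑ j, lam j ^ t) ^ (p / t) * (∑ j, |φ.1 (x j)| ^ q) ^ (p / q)) ^ (1 / p) := by
        refine Real.rpow_le_rpow (Finset.sum_nonneg fun _ _ =>
          Real.rpow_nonneg (abs_nonneg _) _) ?_ (by positivity)
        rw [show (fun j => |φ.1 (lam j • x j)| ^ p) = fun j => lam j ^ p * |φ.1 (x j)| ^ p
          from funext step1] at *
        exact holder
    _ = (∑ j, lam j ^ t) ^ (1 / t) * (∑ j, |φ.1 (x j)| ^ q) ^ (1 / q) := by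
        have hA : (0:ℝ) ≤ ∑ j, lam j ^ t :=
          Finset.sum_nonneg fun j _ => Real.rpow_nonneg (hl j) _
        have hB : (0:ℝ) ≤ ∑ j, |φ.1 (x j)| ^ q :=
          Finset.sum_nonneg fun j _ => Real.rpow_nonneg (abs_nonneg _) _
        rw [Real.mul_rpow (Real.rpow_nonneg hA _) (Real.rpow_nonneg hB _),
          ← Real.rpow_mul hA, ← Real.rpow_mul hB,
          show p / t * (1 / p) = 1 / t by field_simp,
          show p / q * (1 / p) = 1 / q by field_simp]
    _ ≤ (∑ j, lam j ^ t) ^ (1 / t) * weakNorm x q := by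
        refine mul_le_mul_of_nonneg_left (le_weakNorm x hq φ)
          (Real.rpow_nonneg (Finset.sum_nonneg fun j _ => Real.rpow_nonneg (hl j) _) _)

end WeakNormAux

/-- The set of admissible constants for an `m`-linear operator `T` being
multiple `(r; p,…,p)`-summing. -/
def multSummingConsts {m : ℕ} {X : Fin m → Type*} [∀ k, NormedAddCommGroup (X k)]
    [∀ k, NormedSpace ℝ (X k)] {Y : Type*} [NormedAddCommGroup Y] [NormedSpace ℝ Y]
    (T : ContinuousMultilinearMap ℝ X Y) (r p : ℝ) : Set ℝ :=
  {C | 0 ≤ C ∧ ∀ (n : Fin m → ℕ) (x : ∀ k, Fin (n k) → X k),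
    (∑ j : ∀ k, Fin (n k), ‖T (fun k => x k (j k))‖ ^ r) ^ (1 / r) ≤
      C * ∏ k, weakNorm (x k) p}

/-- **Isotropic inclusion theorem for multiple summing operators
(Pellegrino–Santos–Serrano–Teixeira).** If `q ≥ p`, `1/r − m/p + m/q > 0` and
`1/s = 1/r − m/p + m/q`, then every multiple `(r;p)`-summing `m`-linear operator
is multiple `(s;q)`-summing, and `π_{(s;q)}(T) ≤ π_{(r;p)}(T)`. -/
theorem isotropic_inclusion_PSST
    (m : ℕ) (hm : 0 < m)
    {X : Fin m → Type*} [∀ k, NormedAddCommGroup (X k)] [∀ k, NormedSpace ℝ (X k)]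
    [∀ k, CompleteSpace (X k)]
    {Y : Type*} [NormedAddCommGroup Y] [NormedSpace ℝ Y] [CompleteSpace Y]
    (T : ContinuousMultilinearMap ℝ X Y)
    (r s p q : ℝ) (hr : 1 ≤ r) (hp : 1 ≤ p) (hpq : p ≤ q)
    (hpos : 0 < 1 / r - m / p + m / q)
    (hsdef : 1 / s = 1 / r - m / p + m / q)
    (hT : (multSummingConsts T r p).Nonempty) :
    (multSummingConsts T s q).Nonempty ∧
      sInf (multSummingConsts T s q) ≤ sInf (multSummingConsts T r p) := by
  have hr0 : (0:ℝ) < r := lt_of_lt_of_le one_pos hr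
  have hp0 : (0:ℝ) < p := lt_of_lt_of_le one_pos hp
  have hq0 : (0:ℝ) < q := hp0.trans_le hpq
  have hs0 : (0:ℝ) < s := by
    have h1s : 0 < 1 / s := hsdef ▸ hpos
    exact one_div_pos.mp h1s
  have hsub : multSummingConsts T r p ⊆ multSummingConsts T s q := by
    rcases eq_or_lt_of_le hpq with hpq' | hpq'
    · -- p = q : then s = r and the sets coincide
      subst hpq'
      have hsr : s = r := by
        have h1 : 1 / s = 1 / r := by rw [hsdef]; ring
        have hs' : s ≠ 0 := hs0.ne'
        have hr' : r ≠ 0 := hr0.ne'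
        field_simp at h1
        linarith
      rw [hsr]
    · -- p < q : the genuine case
      set t : ℝ := (1 / p - 1 / q)⁻¹ with htdef0
      have hpqinv : 0 < 1 / p - 1 / q := by
        have := one_div_lt_one_div_of_lt hp0 hpq'
        linarith
      have ht0 : 0 < t := inv_pos.2 hpqinv
      have htdef : 1 / t = 1 / p - 1 / q := by rw [htdef0, one_div, inv_inv]
      have hpt : p < t := by
        have h1 : 1 / t < 1 / p := by
          rw [htdef]
          have : 0 < 1 / q := by positivity
          linarith
        exact lt_of_one_div_lt_one_div ht0 h1
      have hmt : (m:ℝ) / t = 1 / r - 1 / s := by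
        rw [hsdef, div_eq_mul_one_div (m:ℝ) t, htdef]
        have e1 : (m:ℝ) / p = m * (1/p) := div_eq_mul_one_div _ _
        have e2 : (m:ℝ) / q = m * (1/q) := div_eq_mul_one_div _ _
        rw [e1, e2]; ring
      rintro C ⟨hC0, hC⟩
      refine ⟨hC0, fun n x => ?_⟩
      set g : (∀ k, Fin (n k)) → ℝ := fun j => ‖T fun k => x k (j k)‖ with hgdef
      have hg0 : ∀ j, 0 ≤ g j := fun j => norm_nonneg _
      set S : ℝ := ∑ j, g j ^ s with hSdef
      have hS0 : 0 ≤ S := Finset.sum_nonneg fun j _ => Real.rpow_nonneg (hg0 j) _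
      rcases eq_or_lt_of_le hS0 with hSz | hSpos
      · -- S = 0 : trivial
        rw [← hSz, Real.zero_rpow (by positivity)]
        exact mul_nonneg hC0 (Finset.prod_nonneg fun k _ => weakNorm_nonneg _ _)
      · -- S > 0
        set Sk : ∀ k, Fin (n k) → ℝ := fun k i => ∑ j, if j k = i then g j ^ s else 0
          with hSkdef
        have hSk_nonneg : ∀ k i, 0 ≤ Sk k i := fun k i =>
          Finset.sum_nonneg fun j _ => by
            show (0:ℝ) ≤ if j k = i then g j ^ s else 0
            split <;> [exact Real.rpow_nonneg (hg0 j) _; exact le_rfl]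
        have hSk_sum : ∀ k, ∑ i, Sk k i = S := by
          intro k
          rw [hSkdef, Finset.sum_comm]
          simp
          exact hSdef.symm
        have hSk_le : ∀ k (j : ∀ k, Fin (n k)), g j ^ s ≤ Sk k (j k) := by
          intro k j
          have := Finset.single_le_sum (f := fun j' : ∀ k, Fin (n k) =>
            if j' k = j k then g j' ^ s else 0)
            (fun j' _ => by
              show (0:ℝ) ≤ if j' k = j k then g j' ^ s else 0
              split <;> [exact Real.rpow_nonneg (hg0 j') _; exact le_rfl])
            (Finset.mem_univ j)
          simpa using this
        set lam : ∀ k, Fin (n k) → ℝ := fun k i => (Sk k i / S) ^ (1 / t) with hlamdef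
        have hlam_nonneg : ∀ k i, 0 ≤ lam k i := fun k i =>
          Real.rpow_nonneg (div_nonneg (hSk_nonneg k i) hS0) _
        have hlam_pow : ∀ k i, lam k i ^ t = Sk k i / S := by
          intro k i
          show ((Sk k i / S) ^ (1 / t)) ^ t = Sk k i / S
          rw [← Real.rpow_mul (div_nonneg (hSk_nonneg k i) hS0),
            one_div_mul_cancel ht0.ne', Real.rpow_one]
        have hlam_sum : ∀ k, ∑ i, lam k i ^ t = 1 := by
          intro k
          rw [Finset.sum_congr rfl fun i _ => hlam_pow k i, ← Finset.sum_div,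
            hSk_sum k, div_self hSpos.ne']
        -- weak norm bound for the scaled families
        have hw : ∀ k, weakNorm (fun i => lam k i • x k i) p ≤ weakNorm (x k) q := by
          intro k
          have h := weakNorm_smul_le (x k) (lam k) (hlam_nonneg k) hp0 hq0 hpt htdef
          rwa [hlam_sum k, Real.one_rpow, one_mul] at h
        -- norm of T on the scaled family
        have hTy : ∀ j : ∀ k, Fin (n k),
            ‖T fun k => lam k (j k) • x k (j k)‖ = (∏ k, lam k (j k)) * g j := by
          intro j
          rw [T.map_smul_univ, norm_smul, Real.norm_eq_abs,
            abs_of_nonneg (Finset.prod_nonneg fun k _ => hlam_nonneg k (j k))]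
        -- exponent arithmetic
        have hse : s * ((m:ℝ) / t * r) + r = s := by
          rw [hmt]
          field_simp
          ring
        have hrs1 : r / s + r * ((m:ℝ) / t) = 1 := by
          rw [hmt]
          field_simp
          ring
        -- termwise lower bound
        have hterm : ∀ j : ∀ k, Fin (n k),
            g j ^ s / S ^ (r * ((m:ℝ) / t)) ≤ ((∏ k, lam k (j k)) * g j) ^ r := by
          intro j
          rcases eq_or_lt_of_le (hg0 j) with hgz | hgz
          · rw [← hgz, mul_zero, Real.zero_rpow hr0.ne', Real.zero_rpow hs0.ne', zero_div]
          · have hb : (0:ℝ) < g j ^ s / S :=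
              div_pos (Real.rpow_pos_of_pos hgz _) hSpos
            have hprod : ((g j ^ s) / S) ^ ((m:ℝ) / t) ≤ ∏ k, lam k (j k) := by
              have h1 : ∀ k, ((g j ^ s) / S) ^ (1 / t) ≤ lam k (j k) := by
                intro k
                show _ ≤ (Sk k (j k) / S) ^ (1 / t)
                have hdiv : (g j ^ s) / S ≤ Sk k (j k) / S := by
                  gcongr
                  exact hSk_le k j
                exact Real.rpow_le_rpow hb.le hdiv (by positivity)
              calc ((g j ^ s) / S) ^ ((m:ℝ) / t)
                  = (((g j ^ s) / S) ^ (1 / t)) ^ (m:ℕ) := by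
                    rw [← Real.rpow_natCast (((g j ^ s) / S) ^ (1 / t)) m,
                      ← Real.rpow_mul hb.le, one_div, inv_mul_eq_div]
                _ = ∏ _k : Fin m, ((g j ^ s) / S) ^ (1 / t) := by
                    rw [Finset.prod_const, Finset.card_univ, Fintype.card_fin]
                _ ≤ ∏ k, lam k (j k) :=
                    Finset.prod_le_prod (fun k _ => Real.rpow_nonneg hb.le _)
                      (fun k _ => h1 k)
            have hmono := Real.rpow_le_rpow
              (mul_nonneg (Real.rpow_nonneg hb.le _) (hg0 j))
              (mul_le_mul_of_nonneg_right hprod (hg0 j)) hr0.le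
            refine le_trans (le_of_eq ?_) hmono
            rw [Real.mul_rpow (Real.rpow_nonneg hb.le _) (hg0 j),
              ← Real.rpow_mul hb.le,
              Real.div_rpow (Real.rpow_nonneg (hg0 j) s) hS0,
              ← Real.rpow_mul (hg0 j),
              div_mul_eq_mul_div, ← Real.rpow_add hgz, hse, mul_comm ((m:ℝ) / t) r]
        -- sum lower bound
        have hsum : S ^ (r / s) ≤ ∑ j : ∀ k, Fin (n k), ((∏ k, lam k (j k)) * g j) ^ r := by
          refine le_trans (le_of_eq ?_) (Finset.sum_le_sum fun j _ => hterm j)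
          rw [← Finset.sum_div, ← hSdef, eq_div_iff (Real.rpow_pos_of_pos hSpos _).ne',
            ← Real.rpow_add hSpos, hrs1, Real.rpow_one]
        -- final chain
        calc S ^ (1 / s)
            = (S ^ (r / s)) ^ (1 / r) := by
              rw [← Real.rpow_mul hS0]
              congr 1
              field_simp
            _ ≤ (∑ j : ∀ k, Fin (n k), ((∏ k, lam k (j k)) * g j) ^ r) ^ (1 / r) :=
              Real.rpow_le_rpow (Real.rpow_nonneg hS0 _) hsum (by positivity)
            _ = (∑ j : ∀ k, Fin (n k),
                ‖T fun k => lam k (j k) • x k (j k)‖ ^ r) ^ (1 / r) := by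
              congr 1
              exact Finset.sum_congr rfl fun j _ => by rw [hTy j]
            _ ≤ C * ∏ k, weakNorm (fun i => lam k i • x k i) p := by
              exact hC n (fun k i => lam k i • x k i)
            _ ≤ C * ∏ k, weakNorm (x k) q := by
              exact mul_le_mul_of_nonneg_left
                (Finset.prod_le_prod (fun k _ => weakNorm_nonneg _ _) (fun k _ => hw k)) hC0
  obtain ⟨C, hCmem⟩ := hT
  refine ⟨⟨C, hsub hCmem⟩, ?_⟩
  refine csInf_le_csInf ⟨0, fun D hD => hD.1⟩ ⟨C, hCmem⟩ hsub
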